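/- Let d ≥ 3, let f ∈ L^{2d/(d+2)}(ℝ^d) be nonnegative, and define the inversion f̂(x) := |x|^{-(d+2)} f(x/|x|²) for x ≠ 0. Then ‖f̂‖_{2d/(d+2)} = ‖f‖_{2d/(d+2)}, ∬_{ℝ^d×ℝ^d} f̂(x)f̂(y)|x−y|^{-(d-2)} dx dy = ∬_{ℝ^d×ℝ^d} f(x)f(y)|x−y|^{-(d-2)} dx dy, and consequently F[f̂] = F[f]. -/

import Mathlib

open MeasureTheory Real
open scoped ENNReal

noncomputable section

/-- Euclidean space `ℝ^d`. -/
abbrev E (d : ℕ) := EuclideanSpace ℝ (Fin d)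

/-- Surface measure of the unit sphere `S^{n-1} ⊆ ℝ^n`, i.e. `2 π^{n/2} / Γ(n/2)`. -/
def unitSphereArea (n : ℕ) : ℝ :=
  2 * Real.pi ^ ((n : ℝ) / 2) / Real.Gamma ((n : ℝ) / 2)

/-- The sharp constant `C_S = (4/(d(d-2))) |S^d|^{-2/d}`, where `|S^d|` is the surface
measure of the unit sphere in `ℝ^{d+1}`. -/
def CS (d : ℕ) : ℝ :=
  (4 / ((d : ℝ) * ((d : ℝ) - 2))) * unitSphereArea (d + 1) ^ (-(2 : ℝ) / (d : ℝ))

/-- The exponent `2d/(d+2)` as an element of `ℝ≥0∞`. -/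
def pHLS (d : ℕ) : ℝ≥0∞ := ENNReal.ofReal (2 * (d : ℝ) / ((d : ℝ) + 2))

/-- The HLS double integral `∬ f(x) f(y) |x-y|^{-(d-2)} dx dy`, well defined in `[0,∞]`
for nonnegative `f`. -/
def hlsI (d : ℕ) (f : E d → ℝ) : ℝ≥0∞ :=
  ∫⁻ x : E d, ∫⁻ y : E d, ENNReal.ofReal (f x * f y * ‖x - y‖ ^ (-((d : ℝ) - 2)))

/-- The HLS functional
`F[f] = C_S ‖f‖_{2d/(d+2)}² − (1/((d-2)|S^{d-1}|)) ∬ f(x) f(y) |x-y|^{-(d-2)} dx dy`. -/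
def hlsF (d : ℕ) (f : E d → ℝ) : ℝ :=
  CS d * ((eLpNorm f (pHLS d) volume).toReal) ^ 2
    - (1 / (((d : ℝ) - 2) * unitSphereArea d)) * (hlsI d f).toReal

namespace Stmt15Aux

open EuclideanGeometry

lemma inv_apply (d : ℕ) (x : E d) :
    inversion (0 : E d) 1 x = (‖x‖ ^ 2)⁻¹ • x := by
  simp [inversion_def, dist_eq_norm, one_div, inv_pow]

lemma inv_eq_zero_iff {d : ℕ} {x : E d} : inversion (0 : E d) 1 x = 0 ↔ x = 0 := by
  rw [inv_apply]
  constructor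
  · intro h
    rcases smul_eq_zero.1 h with h | h
    · have h2 : ‖x‖ ^ 2 = 0 := by
        by_contra h'
        exact (inv_ne_zero h') h
      simpa using pow_eq_zero_iff (n := 2) (by norm_num) |>.1 h2
    · exact h
  · rintro rfl; simp

lemma vol_singleton {d : ℕ} (hd : 3 ≤ d) :
    volume ({(0 : E d)} : Set (E d)) = 0 := by
  haveI : Nonempty (Fin d) := ⟨⟨0, by omega⟩⟩
  haveI : Nontrivial (E d) := by
    have h : (EuclideanSpace.single (⟨0, by omega⟩ : Fin d) (1 : ℝ)) ≠ 0 := by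
      intro h
      have := congrFun (congrArg (fun v : E d => (v : Fin d → ℝ)) h) ⟨0, by omega⟩
      simp at this
    exact ⟨_, _, h⟩
  exact measure_singleton 0

lemma ae_ne_zero {d : ℕ} (hd : 3 ≤ d) : ∀ᵐ x : E d, x ≠ 0 := by
  rw [ae_iff]
  convert vol_singleton hd using 2
  ext x
  simp

lemma lint_compl {d : ℕ} (hd : 3 ≤ d) (h : E d → ℝ≥0∞) :
    ∫⁻ x in ({(0 : E d)}ᶜ : Set (E d)), h x = ∫⁻ x, h x := by
  have h2 := lintegral_add_compl h (measurableSet_singleton (0 : E d)) (μ := volume)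
  rwa [setLIntegral_measure_zero _ _ (vol_singleton hd), zero_add] at h2

/-- Change of variables under the inversion `x ↦ x/|x|²` on `ℝ^d`. -/
lemma key {d : ℕ} (hd : 3 ≤ d) (g : E d → ℝ≥0∞) :
    ∫⁻ x, g x = ∫⁻ x, ENNReal.ofReal (‖x‖ ^ (-(2 * (d : ℝ)))) * g ((‖x‖ ^ 2)⁻¹ • x) := by
  set s : Set (E d) := {(0 : E d)}ᶜ with hs
  have hms : MeasurableSet s := (measurableSet_singleton _).compl
  set φ : E d → E d := inversion (0 : E d) 1 with hφ
  set φ' : E d → (E d →L[ℝ] E d) := fun x =>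
    ((1 : ℝ) / dist x 0) ^ 2 • ((ℝ ∙ (x - 0))ᗮ.reflection : E d →L[ℝ] E d) with hφ'
  have hderiv : ∀ x ∈ s, HasFDerivWithinAt φ (φ' x) s x := fun x hx =>
    (hasFDerivAt_inversion hx).hasFDerivWithinAt
  have hinj : Set.InjOn φ s := ((inversion_involutive (0 : E d) one_ne_zero).injective).injOn
  have himg : φ '' s = s := by
    ext y
    simp only [hs, Set.mem_image, Set.mem_compl_iff, Set.mem_singleton_iff]
    constructor
    · rintro ⟨x, hx, rfl⟩
      exact fun h => hx (inv_eq_zero_iff.1 h)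
    · intro hy
      refine ⟨φ y, fun h => hy ?_, inversion_involutive (0 : E d) one_ne_zero y⟩
      exact inv_eq_zero_iff.1 h
  have hdet : ∀ x ∈ s, ENNReal.ofReal |(φ' x).det| =
      ENNReal.ofReal (‖x‖ ^ (-(2 * (d : ℝ)))) := by
    intro x hx
    have hxn : x ≠ 0 := hx
    have hxpos : (0 : ℝ) < ‖x‖ := norm_pos_iff.2 hxn
    congr 1
    have hcoe : ((((ℝ ∙ (x - 0))ᗮ.reflection : E d →L[ℝ] E d)) : E d →ₗ[ℝ] E d) =
        ((ℝ ∙ (x - 0))ᗮ.reflection).toLinearMap := rfl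
    rw [hφ', ContinuousLinearMap.det, ContinuousLinearMap.coe_smul, hcoe, LinearMap.det_smul,
      Submodule.det_reflection]
    simp only [abs_mul, abs_pow, abs_neg, abs_one, one_pow, mul_one,
      finrank_euclideanSpace_fin, dist_zero_right, one_div, abs_inv, abs_norm]
    have h1 : ‖x‖ ^ (-(2 * (d : ℝ))) = (‖x‖ ^ (2 * d : ℕ))⁻¹ := by
      rw [← Real.rpow_natCast ‖x‖ (2 * d), ← Real.rpow_neg hxpos.le]
      push_cast
      ring_nf
    rw [h1, ← inv_pow, ← pow_mul]
  calc ∫⁻ x, g x = ∫⁻ x in s, g x := (lint_compl hd g).symm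
      _ = ∫⁻ x in φ '' s, g x := by rw [himg]
      _ = ∫⁻ x in s, ENNReal.ofReal |(φ' x).det| * g (φ x) :=
        lintegral_image_eq_lintegral_abs_det_fderiv_mul volume hms hderiv hinj g
      _ = ∫⁻ x in s, ENNReal.ofReal (‖x‖ ^ (-(2 * (d : ℝ)))) * g ((‖x‖ ^ 2)⁻¹ • x) := by
        refine setLIntegral_congr_fun hms (fun x hx => ?_)
        rw [hdet x hx, hφ, inv_apply]
      _ = ∫⁻ x, ENNReal.ofReal (‖x‖ ^ (-(2 * (d : ℝ)))) * g ((‖x‖ ^ 2)⁻¹ • x) :=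
        lint_compl hd _

lemma norm_inv {d : ℕ} {x : E d} (hx : x ≠ 0) :
    ‖(‖x‖ ^ 2)⁻¹ • x‖ = ‖x‖⁻¹ := by
  have hxpos : (0 : ℝ) < ‖x‖ := norm_pos_iff.2 hx
  rw [norm_smul]
  rw [Real.norm_eq_abs, abs_inv, abs_pow, abs_norm]
  field_simp

lemma inv_invol {d : ℕ} (x : E d) :
    (‖(‖x‖ ^ 2)⁻¹ • x‖ ^ 2)⁻¹ • ((‖x‖ ^ 2)⁻¹ • x) = x := by
  have := inversion_involutive (0 : E d) one_ne_zero x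
  rwa [inv_apply, inv_apply] at this

lemma norm_inv_sub {d : ℕ} {x y : E d} (hx : x ≠ 0) (hy : y ≠ 0) :
    ‖(‖x‖ ^ 2)⁻¹ • x - (‖y‖ ^ 2)⁻¹ • y‖ = ‖x - y‖ / (‖x‖ * ‖y‖) := by
  have := dist_inversion_inversion (c := (0 : E d)) hx hy 1
  rw [inv_apply, inv_apply] at this
  simp only [dist_eq_norm, sub_zero] at this
  rw [this]
  ring

end Stmt15Aux

open Stmt15Aux

/-- **Conformal inversion invariance of the HLS functional**: with
`f̂(x) = |x|^{-(d+2)} f(x/|x|²)` (for `x ≠ 0`), the `L^{2d/(d+2)}` norm, the HLS double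
integral, and hence the HLS functional `F` are unchanged. -/
theorem stmt15 (d : ℕ) (hd : 3 ≤ d) (f : E d → ℝ) (hf : ∀ x, 0 ≤ f x)
    (hmem : MemLp f (pHLS d) volume)
    (fhat : E d → ℝ)
    (hfhat : ∀ x : E d, x ≠ 0 → fhat x = ‖x‖ ^ (-((d : ℝ) + 2)) * f ((‖x‖ ^ 2)⁻¹ • x))
    (hfhat0 : fhat 0 = 0) :
    eLpNorm fhat (pHLS d) volume = eLpNorm f (pHLS d) volume ∧
      hlsI d fhat = hlsI d f ∧
      hlsF d fhat = hlsF d f := by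
  have hd3 : (3 : ℝ) ≤ (d : ℝ) := by exact_mod_cast hd
  have hden : (0 : ℝ) < (d : ℝ) + 2 := by linarith
  set Φ : E d → E d := fun x => (‖x‖ ^ 2)⁻¹ • x with hΦ
  set pr : ℝ := 2 * (d : ℝ) / ((d : ℝ) + 2) with hpr
  have hprpos : 0 < pr := by
    apply div_pos <;> linarith
  have hp0 : pHLS d ≠ 0 := by
    simp only [pHLS, ne_eq, ENNReal.ofReal_eq_zero, not_le]
    exact hprpos
  have hpt : pHLS d ≠ ⊤ := ENNReal.ofReal_ne_top
  have hptr : (pHLS d).toReal = pr := ENNReal.toReal_ofReal hprpos.le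
  have hfhat_nonneg : ∀ x, 0 ≤ fhat x := by
    intro x
    by_cases hx : x = 0
    · rw [hx, hfhat0]
    · rw [hfhat x hx]
      exact mul_nonneg (Real.rpow_nonneg (norm_nonneg x) _) (hf _)
  -- Part 1 : the Lp norms agree
  have h1 : eLpNorm fhat (pHLS d) volume = eLpNorm f (pHLS d) volume := by
    rw [eLpNorm_eq_lintegral_rpow_enorm_toReal hp0 hpt, eLpNorm_eq_lintegral_rpow_enorm_toReal hp0 hpt, hptr]
    congr 1
    rw [key hd (fun x => ‖f x‖ₑ ^ pr)]
    refine lintegral_congr_ae ((ae_ne_zero hd).mono fun x hx => ?_)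
    beta_reduce
    have hxpos : (0 : ℝ) < ‖x‖ := norm_pos_iff.2 hx
    rw [Real.enorm_eq_ofReal (hfhat_nonneg x), Real.enorm_eq_ofReal (hf _)]
    rw [hfhat x hx]
    rw [ENNReal.ofReal_rpow_of_nonneg
      (mul_nonneg (Real.rpow_nonneg (norm_nonneg x) _) (hf _)) hprpos.le]
    rw [Real.mul_rpow (Real.rpow_nonneg (norm_nonneg x) _) (hf _)]
    rw [← Real.rpow_mul (norm_nonneg x)]
    have hexp : (-((d : ℝ) + 2)) * pr = -(2 * (d : ℝ)) := by
      rw [hpr]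
      field_simp
    rw [hexp, ENNReal.ofReal_mul (Real.rpow_nonneg (norm_nonneg x) _),
      ← ENNReal.ofReal_rpow_of_nonneg (hf _) hprpos.le]
  -- Part 2 : the double integrals agree
  have h2 : hlsI d fhat = hlsI d f := by
    set e : ℝ := -((d : ℝ) - 2) with he
    set W : E d → ℝ≥0∞ := fun x => ENNReal.ofReal (‖x‖ ^ (-(2 * (d : ℝ)))) with hW
    have hWt : ∀ x, W x ≠ ⊤ := fun x => ENNReal.ofReal_ne_top
    have step1 : hlsI d f =
        ∫⁻ x, W x * ∫⁻ y, ENNReal.ofReal (f (Φ x) * f y * ‖Φ x - y‖ ^ e) := by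
      exact key hd (fun x => ∫⁻ y, ENNReal.ofReal (f x * f y * ‖x - y‖ ^ e))
    have step2 : ∀ x : E d,
        (∫⁻ y, ENNReal.ofReal (f (Φ x) * f y * ‖Φ x - y‖ ^ e)) =
          ∫⁻ y, W y * ENNReal.ofReal (f (Φ x) * f (Φ y) * ‖Φ x - Φ y‖ ^ e) := by
      intro x
      exact key hd (fun y => ENNReal.ofReal (f (Φ x) * f y * ‖Φ x - y‖ ^ e))
    rw [step1]
    simp_rw [step2]
    have step3 : ∀ x : E d,
        W x * ∫⁻ y, W y * ENNReal.ofReal (f (Φ x) * f (Φ y) * ‖Φ x - Φ y‖ ^ e) =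
          ∫⁻ y, W x * (W y * ENNReal.ofReal (f (Φ x) * f (Φ y) * ‖Φ x - Φ y‖ ^ e)) := by
      intro x
      rw [lintegral_const_mul' _ _ (hWt x)]
    simp_rw [step3]
    unfold hlsI
    symm
    refine lintegral_congr_ae ((ae_ne_zero hd).mono fun x hx => ?_)
    refine lintegral_congr_ae ((ae_ne_zero hd).mono fun y hy => ?_)
    beta_reduce
    simp only [hΦ]
    -- pointwise identity for x ≠ 0, y ≠ 0
    have hxpos : (0 : ℝ) < ‖x‖ := norm_pos_iff.2 hx
    have hypos : (0 : ℝ) < ‖y‖ := norm_pos_iff.2 hy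
    rw [hfhat x hx, hfhat y hy]
    simp only [hW, ← he]
    rw [← ENNReal.ofReal_mul (Real.rpow_nonneg (norm_nonneg y) _)]
    rw [← ENNReal.ofReal_mul (Real.rpow_nonneg (norm_nonneg x) _)]
    congr 1
    have hsub : ‖(‖x‖ ^ 2)⁻¹ • x - (‖y‖ ^ 2)⁻¹ • y‖ ^ e
        = ‖x - y‖ ^ e / (‖x‖ ^ e * ‖y‖ ^ e) := by
      rw [norm_inv_sub hx hy, Real.div_rpow (norm_nonneg _) (by positivity),
        Real.mul_rpow hxpos.le hypos.le]
    rw [hsub]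
    have hux : ‖x‖ ^ (-(2 * (d : ℝ))) = ‖x‖ ^ (-((d : ℝ) + 2)) * ‖x‖ ^ e := by
      rw [← Real.rpow_add hxpos]
      congr 1
      rw [he]; ring
    have huy : ‖y‖ ^ (-(2 * (d : ℝ))) = ‖y‖ ^ (-((d : ℝ) + 2)) * ‖y‖ ^ e := by
      rw [← Real.rpow_add hypos]
      congr 1
      rw [he]; ring
    have hex : (0 : ℝ) < ‖x‖ ^ e := Real.rpow_pos_of_pos hxpos e
    have hey : (0 : ℝ) < ‖y‖ ^ e := Real.rpow_pos_of_pos hypos e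
    rw [hux, huy]
    field_simp
  refine ⟨h1, h2, ?_⟩
  unfold hlsF
  rw [h1, h2]

end
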